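/- Let A ⊂ ℝ be a compact interval and D ≥ 1. For every ε > 0 there exists δ > 0 such that for all class-D densities p and q on A, if ‖P − Q‖_BL < δ, where P and Q are the probability measures with Lebesgue densities p and q, then |ν(p) − ν(q)| < ε. In other words, the differential entropy ν is uniformly continuous on the set of class-D densities with respect to the bounded Lipschitz norm on the associated measures. -/

import Mathlib

open MeasureTheory Set

/-- A test function for the bounded Lipschitz norm on the interval `[a, b]`:
`g` satisfies `sup_{x ∈ [a,b]} |g(x)| + Lip(g) ≤ 1`, expressed via a sup-bound `c`
and a Lipschitz constant `L` on `[a,b]` with `c + L ≤ 1`. -/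
def IsBLTestOn (a b : ℝ) (g : ℝ → ℝ) : Prop :=
  ∃ c L : ℝ, 0 ≤ c ∧ 0 ≤ L ∧ c + L ≤ 1 ∧
    (∀ x ∈ Icc a b, |g x| ≤ c) ∧
    (∀ x ∈ Icc a b, ∀ y ∈ Icc a b, |g x - g y| ≤ L * |x - y|)

/-- The bounded Lipschitz norm `‖P - Q‖_BL` of the difference of the measures
`P`, `Q` on `[a,b]` with Lebesgue densities `p`, `q`. -/
noncomputable def blNormDiff (a b : ℝ) (p q : ℝ → ℝ) : ℝ :=
  sSup {r : ℝ | ∃ g : ℝ → ℝ, IsBLTestOn a b g ∧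
    r = |∫ x in Icc a b, g x * (p x - q x)|}

/-- `p` is a class-`D` density on `[a,b]`: `D⁻¹ ≤ p ≤ D` on `[a,b]`, `p` is
`D`-Lipschitz on `[a,b]`, and `∫_{[a,b]} p = 1`. -/
def IsClassDDensity (a b D : ℝ) (p : ℝ → ℝ) : Prop :=
  (∀ x ∈ Icc a b, D⁻¹ ≤ p x ∧ p x ≤ D) ∧
    (∀ x ∈ Icc a b, ∀ y ∈ Icc a b, |p x - p y| ≤ D * |x - y|) ∧
    (∫ x in Icc a b, p x) = 1

/-! ### Auxiliary lemmas -/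

lemma log_mul_bounds {x y : ℝ} (hx : 0 < x) (hy : 0 < y) :
    y * (Real.log x - Real.log y) ≤ x - y ∧ x - y ≤ x * (Real.log x - Real.log y) := by
  constructor
  · have h := Real.log_le_sub_one_of_pos (show (0:ℝ) < x / y from div_pos hx hy)
    rw [Real.log_div hx.ne' hy.ne'] at h
    have h2 := mul_le_mul_of_nonneg_left h hy.le
    have h3 : y * (x / y - 1) = x - y := by field_simp
    linarith
  · have h := Real.log_le_sub_one_of_pos (show (0:ℝ) < y / x from div_pos hy hx)
    rw [Real.log_div hy.ne' hx.ne'] at h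
    have h2 := mul_le_mul_of_nonneg_left h hx.le
    have h3 : x * (y / x - 1) = y - x := by field_simp
    nlinarith

/-- Taylor-type bounds for `t ↦ t log t` on `[D⁻¹, D]`. -/
lemma taylor_bounds {D x y : ℝ} (hD : 1 ≤ D) (hx1 : D⁻¹ ≤ x)
    (hy1 : D⁻¹ ≤ y) :
    0 ≤ x * Real.log x - y * Real.log y - (x - y) * (1 + Real.log y) ∧
    x * Real.log x - y * Real.log y - (x - y) * (1 + Real.log y) ≤ D * (x - y)^2 := by
  have hD0 : (0:ℝ) < D := lt_of_lt_of_le one_pos hD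
  have hx : 0 < x := lt_of_lt_of_le (inv_pos.mpr hD0) hx1
  have hy : 0 < y := lt_of_lt_of_le (inv_pos.mpr hD0) hy1
  have hxD : 1 ≤ D * x := by
    nlinarith [mul_le_mul_of_nonneg_left hx1 hD0.le, mul_inv_cancel₀ hD0.ne']
  have hyD : 1 ≤ D * y := by
    nlinarith [mul_le_mul_of_nonneg_left hy1 hD0.le, mul_inv_cancel₀ hD0.ne']
  obtain ⟨h1, h2⟩ := log_mul_bounds hx hy
  set t := Real.log x - Real.log y with ht
  have hexp : x * Real.log x - y * Real.log y - (x - y) * (1 + Real.log y)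
      = x * t - (x - y) := by rw [ht]; ring
  rw [hexp]
  constructor
  · linarith
  · rcases le_total y x with hxy | hxy
    · have ht0 : 0 ≤ t := sub_nonneg.mpr (Real.log_le_log hy hxy)
      nlinarith [mul_le_mul_of_nonneg_left h1 (mul_nonneg hD0.le (sub_nonneg.mpr hxy)),
        mul_nonneg (sub_nonneg.mpr hxy) ht0]
    · have ht0 : t ≤ 0 := sub_nonpos.mpr (Real.log_le_log hx hxy)
      nlinarith [mul_le_mul_of_nonpos_left h2
          (mul_nonpos_of_nonneg_of_nonpos hD0.le (sub_nonpos.mpr hxy)),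
        mul_nonneg (neg_nonneg.mpr (sub_nonpos.mpr hxy)) (neg_nonneg.mpr ht0)]

/-- The logarithm is `D`-Lipschitz on `[D⁻¹, D]`. -/
lemma log_lip {D u v : ℝ} (hD : 1 ≤ D) (hu1 : D⁻¹ ≤ u) (hv1 : D⁻¹ ≤ v) :
    |Real.log u - Real.log v| ≤ D * |u - v| := by
  have hD0 : (0:ℝ) < D := lt_of_lt_of_le one_pos hD
  have hu : 0 < u := lt_of_lt_of_le (inv_pos.mpr hD0) hu1
  have hv : 0 < v := lt_of_lt_of_le (inv_pos.mpr hD0) hv1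
  have huD : 1 ≤ D * u := by
    nlinarith [mul_le_mul_of_nonneg_left hu1 hD0.le, mul_inv_cancel₀ hD0.ne']
  have hvD : 1 ≤ D * v := by
    nlinarith [mul_le_mul_of_nonneg_left hv1 hD0.le, mul_inv_cancel₀ hD0.ne']
  rcases le_total v u with huv | huv
  · obtain ⟨h1, _⟩ := log_mul_bounds hu hv
    have ht0 : 0 ≤ Real.log u - Real.log v := sub_nonneg.mpr (Real.log_le_log hv huv)
    rw [abs_of_nonneg ht0, abs_of_nonneg (sub_nonneg.mpr huv)]
    nlinarith [mul_le_mul_of_nonneg_left h1 hD0.le]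
  · obtain ⟨h1, _⟩ := log_mul_bounds hv hu
    have ht0 : 0 ≤ Real.log v - Real.log u := sub_nonneg.mpr (Real.log_le_log hu huv)
    rw [abs_sub_comm, abs_sub_comm u v, abs_of_nonneg ht0,
      abs_of_nonneg (sub_nonneg.mpr huv)]
    nlinarith [mul_le_mul_of_nonneg_left h1 hD0.le]

/-- Lipschitz on `Icc` implies continuous on `Icc`. -/
lemma contOn_of_lip {a b D : ℝ} (hD0 : 0 ≤ D) {p : ℝ → ℝ}
    (h : ∀ x ∈ Icc a b, ∀ y ∈ Icc a b, |p x - p y| ≤ D * |x - y|) :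
    ContinuousOn p (Icc a b) := by
  refine (LipschitzOnWith.of_dist_le_mul (K := D.toNNReal) fun x hx y hy => ?_).continuousOn
  rw [Real.dist_eq, Real.dist_eq, Real.coe_toNNReal D hD0]
  exact h x hx y hy

/-- Any BL test integral is bounded by the BL norm. -/
lemma abs_test_integral_le {a b D : ℝ} (hD : 1 ≤ D) {p q g : ℝ → ℝ}
    (hp : IsClassDDensity a b D p) (hq : IsClassDDensity a b D q)
    (hg : IsBLTestOn a b g) :
    |∫ x in Icc a b, g x * (p x - q x)| ≤ blNormDiff a b p q := by
  have hD0 : (0:ℝ) < D := lt_of_lt_of_le one_pos hD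
  apply le_csSup
  · refine ⟨2 * D * (volume (Icc a b)).toReal, ?_⟩
    rintro r ⟨g', ⟨c, L, hc, hL, hcL, hgb, hglip⟩, rfl⟩
    rw [← Real.norm_eq_abs]
    refine norm_setIntegral_le_of_norm_le_const measure_Icc_lt_top (fun x hx => ?_)
    · have h1 : |g' x| ≤ 1 := (hgb x hx).trans (by linarith)
      have h2 : |p x - q x| ≤ 2 * D := by
        have hp1 := hp.1 x hx
        have hq1 := hq.1 x hx
        have : (0:ℝ) < D⁻¹ := inv_pos.mpr hD0
        rw [abs_sub_le_iff]
        constructor <;> linarith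
      rw [Real.norm_eq_abs, abs_mul]
      calc |g' x| * |p x - q x| ≤ 1 * (2 * D) :=
            mul_le_mul h1 h2 (abs_nonneg _) zero_le_one
        _ = 2 * D := one_mul _
  · exact ⟨g, hg, rfl⟩

/-- The differential entropy `ν(p) = -∫_{[a,b]} p log p` is uniformly continuous on the
set of class-`D` densities on the compact interval `[a,b]`, with respect to the bounded
Lipschitz norm on the associated probability measures. -/
theorem stmt_7 {a b D : ℝ} (hD : 1 ≤ D) :
    ∀ ε > 0, ∃ δ > 0, ∀ p q : ℝ → ℝ,
      IsClassDDensity a b D p → IsClassDDensity a b D q →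
      blNormDiff a b p q < δ →
      |(-∫ x in Icc a b, p x * Real.log (p x)) -
        (-∫ x in Icc a b, q x * Real.log (q x))| < ε := by
  intro ε hε
  have hD0 : (0:ℝ) < D := lt_of_lt_of_le one_pos hD
  have hlogD : 0 ≤ Real.log D := Real.log_nonneg hD
  set C1 : ℝ := 1 + Real.log D + D ^ 2 with hC1def
  have hC1 : 0 < C1 := by positivity
  set M : ℝ := C1 + 3 * D ^ 2 with hMdef
  have hM : 0 < M := by positivity
  refine ⟨ε / M, div_pos hε hM, ?_⟩
  intro p q hp hq hB
  obtain ⟨hpb, hpl, hpi⟩ := hp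
  obtain ⟨hqb, hql, hqi⟩ := hq
  have hppos : ∀ x ∈ Icc a b, 0 < p x :=
    fun x hx => lt_of_lt_of_le (inv_pos.mpr hD0) (hpb x hx).1
  have hqpos : ∀ x ∈ Icc a b, 0 < q x :=
    fun x hx => lt_of_lt_of_le (inv_pos.mpr hD0) (hqb x hx).1
  have hpc : ContinuousOn p (Icc a b) := contOn_of_lip hD0.le hpl
  have hqc : ContinuousOn q (Icc a b) := contOn_of_lip hD0.le hql
  have hlogp : ContinuousOn (fun x => Real.log (p x)) (Icc a b) :=
    hpc.log fun x hx => (hppos x hx).ne'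
  have hlogq : ContinuousOn (fun x => Real.log (q x)) (Icc a b) :=
    hqc.log fun x hx => (hqpos x hx).ne'
  -- bound on |log q|
  have hlogq_bdd : ∀ x ∈ Icc a b, |Real.log (q x)| ≤ Real.log D := by
    intro x hx
    rw [abs_le]
    constructor
    · have := Real.log_le_log (inv_pos.mpr hD0) (hqb x hx).1
      rwa [Real.log_inv] at this
    · exact Real.log_le_log (hqpos x hx) (hqb x hx).2
  -- first test function
  have hg1 : IsBLTestOn a b (fun x => (1 + Real.log (q x)) / C1) := by
    refine ⟨(1 + Real.log D) / C1, D ^ 2 / C1, by positivity, by positivity, ?_, ?_, ?_⟩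
    · rw [← add_div, hC1def, div_self hC1.ne']
    · intro x hx
      rw [abs_div, abs_of_pos hC1]
      have h := hlogq_bdd x hx
      have h2 : |1 + Real.log (q x)| ≤ 1 + Real.log D := by
        rw [abs_le] at h ⊢
        constructor <;> linarith [h.1, h.2]
      gcongr
    · intro x hx y hy
      rw [div_sub_div_same, abs_div, abs_of_pos hC1, div_le_iff₀ hC1]
      have h1 : |Real.log (q x) - Real.log (q y)| ≤ D * |q x - q y| :=
        log_lip hD (hqb x hx).1 (hqb y hy).1
      have h2 : |q x - q y| ≤ D * |x - y| := hql x hx y hy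
      calc |1 + Real.log (q x) - (1 + Real.log (q y))|
          = |Real.log (q x) - Real.log (q y)| := by congr 1; ring
        _ ≤ D * |q x - q y| := h1
        _ ≤ D * (D * |x - y|) := mul_le_mul_of_nonneg_left h2 hD0.le
        _ = D ^ 2 * |x - y| := by ring
        _ = D ^ 2 / C1 * |x - y| * C1 := by field_simp
  -- second test function
  have hg2 : IsBLTestOn a b (fun x => (p x - q x) / (3 * D)) := by
    have h3D : (0:ℝ) < 3 * D := by positivity
    refine ⟨1/3, 2/3, by norm_num, by norm_num, by norm_num, ?_, ?_⟩
    · intro x hx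
      rw [abs_div, abs_of_pos h3D, div_le_iff₀ h3D]
      have hp1 := hpb x hx; have hq1 := hqb x hx
      have hinv : (0:ℝ) < D⁻¹ := inv_pos.mpr hD0
      rw [abs_sub_le_iff]
      constructor <;> [nlinarith; nlinarith]
    · intro x hx y hy
      rw [div_sub_div_same, abs_div, abs_of_pos h3D, div_le_iff₀ h3D]
      have h1 : |p x - p y| ≤ D * |x - y| := hpl x hx y hy
      have h2 : |q x - q y| ≤ D * |x - y| := hql x hx y hy
      calc |p x - q x - (p y - q y)| = |(p x - p y) - (q x - q y)| := by congr 1; ring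
        _ ≤ |p x - p y| + |q x - q y| := abs_sub _ _
        _ ≤ D * |x - y| + D * |x - y| := add_le_add h1 h2
        _ = 2/3 * |x - y| * (3 * D) := by ring
  set B := blNormDiff a b p q with hBdef
  have hB1 := abs_test_integral_le hD ⟨hpb, hpl, hpi⟩ ⟨hqb, hql, hqi⟩ hg1
  have hB2 := abs_test_integral_le hD ⟨hpb, hpl, hpi⟩ ⟨hqb, hql, hqi⟩ hg2
  -- rewrite test integrals
  have key1 : (∫ x in Icc a b, (1 + Real.log (q x)) * (p x - q x))
      = C1 * ∫ x in Icc a b, (1 + Real.log (q x)) / C1 * (p x - q x) := by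
    rw [← MeasureTheory.integral_const_mul]
    exact MeasureTheory.integral_congr_ae (Filter.Eventually.of_forall fun x => by
      field_simp)
  have key2 : (∫ x in Icc a b, (p x - q x) ^ 2)
      = (3 * D) * ∫ x in Icc a b, (p x - q x) / (3 * D) * (p x - q x) := by
    rw [← MeasureTheory.integral_const_mul]
    exact MeasureTheory.integral_congr_ae (Filter.Eventually.of_forall fun x => by
      field_simp)
  have hE1 : |∫ x in Icc a b, (1 + Real.log (q x)) * (p x - q x)| ≤ C1 * B := by
    rw [key1, abs_mul, abs_of_pos hC1]
    exact mul_le_mul_of_nonneg_left hB1 hC1.le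
  have hE2 : (∫ x in Icc a b, (p x - q x) ^ 2) ≤ 3 * D * B := by
    calc (∫ x in Icc a b, (p x - q x) ^ 2)
        ≤ |∫ x in Icc a b, (p x - q x) ^ 2| := le_abs_self _
      _ = 3 * D * |∫ x in Icc a b, (p x - q x) / (3 * D) * (p x - q x)| := by
          rw [key2, abs_mul, abs_of_pos (by positivity : (0:ℝ) < 3 * D)]
      _ ≤ 3 * D * B := mul_le_mul_of_nonneg_left hB2 (by positivity)
  -- integrability
  have i1 : IntegrableOn (fun x => (1 + Real.log (q x)) * (p x - q x)) (Icc a b) :=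
    (((continuousOn_const.add hlogq).mul (hpc.sub hqc))).integrableOn_Icc
  have i2 : IntegrableOn (fun x => D * (p x - q x) ^ 2) (Icc a b) :=
    (continuousOn_const.mul ((hpc.sub hqc).pow 2)).integrableOn_Icc
  have i2' : IntegrableOn (fun x => (p x - q x) ^ 2) (Icc a b) :=
    ((hpc.sub hqc).pow 2).integrableOn_Icc
  have i4 : IntegrableOn (fun x => p x * Real.log (p x)) (Icc a b) :=
    (hpc.mul hlogp).integrableOn_Icc
  have i5 : IntegrableOn (fun x => q x * Real.log (q x)) (Icc a b) :=
    (hqc.mul hlogq).integrableOn_Icc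
  have i3 : IntegrableOn (fun x => p x * Real.log (p x) - q x * Real.log (q x)
      - (p x - q x) * (1 + Real.log (q x))) (Icc a b) := by
    apply Integrable.sub (Integrable.sub i4 i5)
    exact ((hpc.sub hqc).mul (continuousOn_const.add hlogq)).integrableOn_Icc
  -- remainder bounds
  have hR1 : 0 ≤ ∫ x in Icc a b, (p x * Real.log (p x) - q x * Real.log (q x)
      - (p x - q x) * (1 + Real.log (q x))) := by
    refine setIntegral_nonneg measurableSet_Icc fun x hx => ?_
    exact (taylor_bounds hD (hpb x hx).1 (hqb x hx).1).1
  have hR2 : (∫ x in Icc a b, (p x * Real.log (p x) - q x * Real.log (q x)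
      - (p x - q x) * (1 + Real.log (q x))))
      ≤ ∫ x in Icc a b, D * (p x - q x) ^ 2 := by
    refine setIntegral_mono_on i3 i2 measurableSet_Icc fun x hx => ?_
    exact (taylor_bounds hD (hpb x hx).1 (hqb x hx).1).2
  have hDint : (∫ x in Icc a b, D * (p x - q x) ^ 2)
      = D * ∫ x in Icc a b, (p x - q x) ^ 2 := MeasureTheory.integral_const_mul D _
  -- assemble the decomposition
  have hdecomp : (∫ x in Icc a b, p x * Real.log (p x))
      - (∫ x in Icc a b, q x * Real.log (q x))
      = (∫ x in Icc a b, (1 + Real.log (q x)) * (p x - q x))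
        + ∫ x in Icc a b, (p x * Real.log (p x) - q x * Real.log (q x)
          - (p x - q x) * (1 + Real.log (q x))) := by
    rw [← MeasureTheory.integral_sub i4 i5, ← MeasureTheory.integral_add i1 i3]
    exact MeasureTheory.integral_congr_ae (Filter.Eventually.of_forall fun x => by ring)
  have hRabs : |∫ x in Icc a b, (p x * Real.log (p x) - q x * Real.log (q x)
      - (p x - q x) * (1 + Real.log (q x)))| ≤ D * (3 * D * B) := by
    rw [abs_of_nonneg hR1]
    calc _ ≤ ∫ x in Icc a b, D * (p x - q x) ^ 2 := hR2
      _ = D * ∫ x in Icc a b, (p x - q x) ^ 2 := hDint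
      _ ≤ D * (3 * D * B) := mul_le_mul_of_nonneg_left hE2 hD0.le
  have htotal : |(∫ x in Icc a b, p x * Real.log (p x))
      - (∫ x in Icc a b, q x * Real.log (q x))| ≤ M * B := by
    rw [hdecomp]
    calc |_ + _| ≤ _ := abs_add_le _ _
      _ ≤ C1 * B + D * (3 * D * B) := add_le_add hE1 hRabs
      _ = M * B := by rw [hMdef]; ring
  have hfin : M * B < M * (ε / M) := mul_lt_mul_of_pos_left hB hM
  rw [mul_div_cancel₀ ε hM.ne'] at hfin
  calc |(-∫ x in Icc a b, p x * Real.log (p x)) -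
        (-∫ x in Icc a b, q x * Real.log (q x))|
      = |(∫ x in Icc a b, p x * Real.log (p x)) -
        (∫ x in Icc a b, q x * Real.log (q x))| := by rw [← abs_neg]; ring_nf
    _ ≤ M * B := htotal
    _ < ε := hfin
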